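/- arXiv:1011.0515 — 2 statements merged into one kernel-verified Lean document; each statement's English description precedes it below -/
import Mathlib

section
/- For ρ = Σ_{i=1}^{d-1} λ_i Π_i + λ_d P⁺_d with λ_i ≥ 0 summing to 1, the partial transpose ρ^Γ is positive semidefinite if and only if λ_i λ_{d-i} ≥ λ_d² for all i = 1,...,d-1. -/
open Matrix Complex BigOperators ComplexOrder

/-- `Π_i = (1/d) Σ_k |k, k+i⟩⟨k, k+i|` -/
noncomputable def PiOp (d : ℕ) (n : Fin d) : Matrix (Fin d × Fin d) (Fin d × Fin d) ℂ :=
  (d : ℂ)⁻¹ • ∑ i : Fin d, Matrix.single (i, i + n) (i, i + n) 1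

/-- `P⁺_d = (1/d) Σ_{ij} |ii⟩⟨jj|` -/
noncomputable def Pplus (d : ℕ) : Matrix (Fin d × Fin d) (Fin d × Fin d) ℂ :=
  (d : ℂ)⁻¹ • ∑ i : Fin d, ∑ j : Fin d, Matrix.single (i, i) (j, j) 1

/-- partial transpose on the second factor -/
def PT {d : ℕ} (ρ : Matrix (Fin d × Fin d) (Fin d × Fin d) ℂ) :
    Matrix (Fin d × Fin d) (Fin d × Fin d) ℂ :=
  fun p q => ρ (p.1, q.2) (q.1, p.2)

open Fin.CommRing

lemma fin_val_sub_add (d : ℕ) [NeZero d] (a b : Fin d) (h : a ≠ b) :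
    (b - a).val + (a - b).val = d := by
  have h1 : b - a ≠ 0 := sub_ne_zero.mpr (Ne.symm h)
  have h2 : a - b = -(b - a) := (neg_sub b a).symm
  have hv : 0 < (b - a).val := Nat.pos_of_ne_zero (Fin.val_ne_zero_iff.mpr h1)
  have hlt : (b - a).val < d := (b - a).isLt
  rw [h2, Fin.neg_def]
  show (b - a).val + (d - (b - a).val) % d = d
  rw [Nat.mod_eq_of_lt (by omega)]
  omega

lemma entry (d : ℕ) [NeZero d] (hd : 2 ≤ d) (lam : ℕ → ℝ) (a b c e : Fin d) :
    PT ((∑ i ∈ Finset.Icc 1 (d - 1), (lam i : ℂ) • PiOp d (i : Fin d)) +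
        (lam d : ℂ) • Pplus d) (a, b) (c, e) =
    (if a = c ∧ b = e ∧ a ≠ b then ((lam ((b - a : Fin d).val) : ℂ) * (d : ℂ)⁻¹) else 0)
      + (if a = e ∧ b = c then ((lam d : ℂ) * (d : ℂ)⁻¹) else 0) := by
  have hPi : ∀ n : Fin d, PiOp d n (a, e) (c, b)
      = if a = c ∧ e = b ∧ e = a + n then (d : ℂ)⁻¹ else 0 := by
    intro n
    simp only [PiOp, Matrix.smul_apply, Matrix.sum_apply, Matrix.single, Matrix.of_apply]
    rw [Finset.sum_eq_single a]
    · by_cases h1 : a = c <;> by_cases h2 : e = b <;> by_cases h3 : e = a + n <;>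
        simp_all [Prod.ext_iff, eq_comm]
    · intro k _ hk
      simp [Prod.ext_iff, hk]
    · simp
  have hP : Pplus d (a, e) (c, b) = if a = e ∧ b = c then (d : ℂ)⁻¹ else 0 := by
    simp only [Pplus, Matrix.smul_apply, Matrix.sum_apply, Matrix.single, Matrix.of_apply]
    rw [Finset.sum_eq_single a]
    · rw [Finset.sum_eq_single c]
      · by_cases h1 : a = e <;> by_cases h2 : b = c <;> simp_all [Prod.ext_iff, eq_comm]
      · intro k _ hk; simp [Prod.ext_iff, hk]
      · simp
    · intro k _ hk
      rw [Finset.sum_eq_zero]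
      intro j _
      simp [Prod.ext_iff, hk]
    · simp
  simp only [PT, Matrix.add_apply, Matrix.smul_apply, Matrix.sum_apply, hPi, hP, smul_eq_mul,
    mul_ite, mul_zero]
  congr 1
  by_cases h1 : a = c <;> by_cases h2 : b = e
  · subst h1 h2
    by_cases h3 : a = b
    · subst h3
      rw [Finset.sum_eq_zero]
      · simp
      · intro i hi
        simp only [Finset.mem_Icc] at hi
        have : ((i : Fin d)) ≠ 0 := by
          have : (i : Fin d).val = i := Fin.val_cast_of_lt (by omega)
          simpa [Fin.ext_iff, this] using (by omega : i ≠ 0)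
        simp only [ite_eq_right_iff]
        rintro ⟨-, -, h⟩
        exact absurd (left_eq_add.mp h) this
    · rw [Finset.sum_eq_single ((b - a).val)]
      · have hval : (((b - a).val : ℕ) : Fin d) = b - a := Fin.cast_val_eq_self _
        have : b = a + ((((b - a).val : ℕ) : Fin d)) := by rw [hval]; ring
        simp [h3, ← this, Ne.symm h3]
      · intro i hi hne
        simp only [Finset.mem_Icc] at hi
        simp only [ite_eq_right_iff]
        rintro ⟨-, -, h⟩
        exfalso
        apply hne
        have : (i : Fin d) = b - a := by rw [h]; ring
        have hv : (i : Fin d).val = i := Fin.val_cast_of_lt (by omega)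
        rw [← this, hv]
      · intro habs
        exfalso
        apply habs
        simp only [Finset.mem_Icc]
        have h1 : b - a ≠ 0 := sub_ne_zero.mpr (Ne.symm h3)
        have hv : 0 < (b - a).val := Nat.pos_of_ne_zero (Fin.val_ne_zero_iff.mpr h1)
        have hlt : (b - a).val < d := (b - a).isLt
        omega
  · rw [Finset.sum_eq_zero]
    · simp [h1, h2]
    · intro i _
      split_ifs with h
      · exact absurd h.2.1.symm h2
      · rfl
  · rw [Finset.sum_eq_zero]
    · simp [h1, h2]
    · intro i _
      split_ifs with h
      · exact absurd h.1 h1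
      · rfl
  · rw [Finset.sum_eq_zero]
    · simp [h1, h2]
    · intro i _
      split_ifs with h
      · exact absurd h.1 h1
      · rfl

lemma quad_two {n : Type*} [Fintype n] [DecidableEq n] {M : Matrix n n ℂ} (h : M.PosSemidef)
    (p q : n) (hpq : p ≠ q) (s t : ℂ) :
    0 ≤ (starRingEnd ℂ) s * s * M p p + (starRingEnd ℂ) s * t * M p q
      + (starRingEnd ℂ) t * s * M q p + (starRingEnd ℂ) t * t * M q q := by
  have key := h.dotProduct_mulVec_nonneg (Pi.single p s + Pi.single q t : n → ℂ)
  have hx : star (Pi.single p s + Pi.single q t : n → ℂ) ⬝ᵥ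
      (M *ᵥ (Pi.single p s + Pi.single q t : n → ℂ)) =
      (starRingEnd ℂ) s * s * M p p + (starRingEnd ℂ) s * t * M p q
      + (starRingEnd ℂ) t * s * M q p + (starRingEnd ℂ) t * t * M q q := by
    have hstar : star (Pi.single p s + Pi.single q t : n → ℂ)
        = (Pi.single p ((starRingEnd ℂ) s) : n → ℂ) + Pi.single q ((starRingEnd ℂ) t) := by
      funext r
      by_cases hr : r = p <;> by_cases hr' : r = q <;>
        simp_all [Pi.single_apply, hpq, star_zero]
    rw [hstar, Matrix.mulVec_add, Matrix.mulVec_single, Matrix.mulVec_single,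
      add_dotProduct, dotProduct_add, dotProduct_add,
      single_dotProduct, single_dotProduct,
      single_dotProduct, single_dotProduct]
    simp only [Pi.smul_apply, Matrix.col_apply, op_smul_eq_mul]
    ring
  rwa [hx] at key

lemma real_det (A B C : ℝ) (hA : 0 ≤ A) (hB : 0 ≤ B) (hC : 0 ≤ C)
    (hQ : ∀ s t : ℝ, 0 ≤ A*s^2 + B*t^2 + 2*C*s*t) : C^2 ≤ A*B := by
  rcases eq_or_lt_of_le hA with hA0 | hA0
  · rcases eq_or_lt_of_le hC with hC0 | hC0
    · rw [← hC0]; nlinarith [mul_nonneg hA hB]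
    · exfalso
      have ht := hQ (-((B+1)/(2*C))) 1
      have h2 : 2*C*((B+1)/(2*C)) = B + 1 := by field_simp
      nlinarith [ht, h2]
  · have key : 0 ≤ A*(A*B - C^2) := by nlinarith [hQ (-C) A]
    nlinarith [key, hA0]

lemma real_block (A B C u v : ℝ) (hA : 0 ≤ A) (hB : 0 ≤ B) (hC : 0 ≤ C)
    (h : C^2 ≤ A*B) (hu : 0 ≤ u) (hv : 0 ≤ v) : 2*C*u*v ≤ A*u^2 + B*v^2 := by
  rcases eq_or_lt_of_le hA with hA0 | hA0
  · have hC0 : C = 0 := by nlinarith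
    subst hC0
    rw [← hA0]
    nlinarith [mul_nonneg hB (sq_nonneg v)]
  · have key : 0 ≤ A*(A*u^2 + B*v^2 - 2*C*u*v) := by
      nlinarith [sq_nonneg (A*u - C*v), mul_nonneg (sub_nonneg.mpr h) (sq_nonneg v)]
    nlinarith [key, hA0]

lemma key_c (A B C : ℝ) (hA : 0 ≤ A) (hB : 0 ≤ B) (hC : 0 ≤ C) (h : C ^ 2 ≤ A * B) (s t : ℂ) :
    0 ≤ (A : ℂ) * ((starRingEnd ℂ) s * s) + (B : ℂ) * ((starRingEnd ℂ) t * t)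
        + (C : ℂ) * ((starRingEnd ℂ) s * t) + (C : ℂ) * ((starRingEnd ℂ) t * s) := by
  have h1 : (starRingEnd ℂ) s * s = ((Complex.normSq s : ℝ) : ℂ) := by
    rw [mul_comm, Complex.mul_conj]
  have h2 : (starRingEnd ℂ) t * t = ((Complex.normSq t : ℝ) : ℂ) := by
    rw [mul_comm, Complex.mul_conj]
  have h3 : (starRingEnd ℂ) s * t + (starRingEnd ℂ) t * s
      = ((2 * ((starRingEnd ℂ) s * t).re : ℝ) : ℂ) := by
    have : (starRingEnd ℂ) t * s = (starRingEnd ℂ) ((starRingEnd ℂ) s * t) := by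
      simp [_root_.map_mul]; ring
    rw [this, Complex.add_conj]
  have hre : -(‖s‖ * ‖t‖) ≤ ((starRingEnd ℂ) s * t).re := by
    have := Complex.abs_re_le_norm ((starRingEnd ℂ) s * t)
    have habs : ‖(starRingEnd ℂ) s * t‖ = ‖s‖ * ‖t‖ := by
      rw [norm_mul, Complex.norm_conj]
    rw [habs] at this
    cases' abs_le.mp this with h1 _
    linarith
  calc (0:ℂ) ≤ ((A * Complex.normSq s + B * Complex.normSq t
        + C * (2 * ((starRingEnd ℂ) s * t).re) : ℝ) : ℂ) := by
        rw [Complex.zero_le_real]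
        have hb := real_block A B C (‖s‖) (‖t‖) hA hB hC h
          (norm_nonneg s) (norm_nonneg t)
        have hns : Complex.normSq s = ‖s‖ ^ 2 := (Complex.sq_norm s).symm
        have hnt : Complex.normSq t = ‖t‖ ^ 2 := (Complex.sq_norm t).symm
        nlinarith [mul_le_mul_of_nonneg_left hre hC]
    _ = _ := by
        have h3' : (C:ℂ) * ((starRingEnd ℂ) s * t) + (C:ℂ) * ((starRingEnd ℂ) t * s)
            = (C:ℂ) * ((2 * ((starRingEnd ℂ) s * t).re : ℝ) : ℂ) := by rw [← mul_add, h3]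
        rw [h1, h2]
        push_cast at h3' ⊢
        linear_combination -h3'

/-- `ρ = Σ_{i=1}^{d-1} λ_i Π_i + λ_d P⁺_d` is PPT iff `λ_i λ_{d-i} ≥ λ_d²` for all `i`. -/
theorem PPT_iff (d : ℕ) [NeZero d] (hd : 2 ≤ d) (lam : ℕ → ℝ)
    (hpos : ∀ i, 1 ≤ i → i ≤ d → 0 ≤ lam i)
    (hsum : ∑ i ∈ Finset.Icc 1 d, lam i = 1) :
    (PT ((∑ i ∈ Finset.Icc 1 (d - 1), (lam i : ℂ) • PiOp d (Fin.ofNat d i)) +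
        (lam d : ℂ) • Pplus d)).PosSemidef ↔
      ∀ i, 1 ≤ i → i ≤ d - 1 → lam d ^ 2 ≤ lam i * lam (d - i) := by
  set M : Matrix (Fin d × Fin d) (Fin d × Fin d) ℂ :=
    PT ((∑ i ∈ Finset.Icc 1 (d - 1), (lam i : ℂ) • PiOp d (Fin.ofNat d i)) +
        (lam d : ℂ) • Pplus d) with hMdef
  have hent : ∀ p q : Fin d × Fin d, M p q =
      (if p.1 = q.1 ∧ p.2 = q.2 ∧ p.1 ≠ p.2
        then ((lam ((p.2 - p.1 : Fin d).val) : ℂ) * (d : ℂ)⁻¹) else 0)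
      + (if p.1 = q.2 ∧ p.2 = q.1 then ((lam d : ℂ) * (d : ℂ)⁻¹) else 0) :=
    fun p q => entry d hd lam p.1 p.2 q.1 q.2
  have hdC : (0:ℂ) ≤ (d:ℂ)⁻¹ := by
    rw [show ((d:ℂ))⁻¹ = (((d:ℝ)⁻¹ : ℝ) : ℂ) by push_cast; ring, Complex.zero_le_real]
    positivity
  have hCd : 0 ≤ lam d := hpos d (by omega) le_rfl
  constructor
  · -- forward
    intro hPSD i hi1 hi2
    have hilt : i < d := by omega
    set iF : Fin d := (i : Fin d) with hiF
    have hiv : iF.val = i := Fin.val_cast_of_lt hilt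
    have hiF0 : iF ≠ 0 := by
      simp [Fin.ext_iff, hiv]; omega
    have hne : ((0 : Fin d), iF) ≠ (iF, (0 : Fin d)) := by
      simp [Prod.ext_iff, Ne.symm hiF0]
    have hsubval : ((0 : Fin d) - iF).val = d - i := by
      have := fin_val_sub_add d (0 : Fin d) iF (Ne.symm hiF0)
      have h0 : (iF - 0).val = i := by rw [sub_zero, hiv]
      omega
    have hQ : ∀ s t : ℝ, 0 ≤ lam i * s^2 + lam (d-i) * t^2 + 2 * lam d * s * t := by
      intro s t
      have hq := quad_two hPSD ((0 : Fin d), iF) (iF, (0 : Fin d)) hne (s : ℂ) (t : ℂ)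
      rw [hent ((0 : Fin d), iF) ((0 : Fin d), iF), hent ((0 : Fin d), iF) (iF, (0 : Fin d)),
        hent (iF, (0 : Fin d)) ((0 : Fin d), iF), hent (iF, (0 : Fin d)) (iF, (0 : Fin d))] at hq
      simp only [Ne.symm hiF0, hiF0, sub_zero, hiv, hsubval, if_true, if_false,
        and_true, and_false, false_and, true_and, ne_eq, not_true, not_false_iff,
        if_neg, eq_self_iff_true] at hq
      have hq2 : (0:ℂ) ≤ (((lam i * s^2 + lam (d-i) * t^2 + 2 * lam d * s * t) * (d:ℝ)⁻¹ : ℝ) : ℂ) := by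
        calc (0:ℂ) ≤ _ := hq
          _ = _ := by
            push_cast
            simp [Complex.conj_ofReal]
            ring
      rw [Complex.zero_le_real] at hq2
      have hd0 : (0:ℝ) < (d:ℝ)⁻¹ := by positivity
      nlinarith [hq2, hd0]
    have hA : 0 ≤ lam i := hpos i hi1 (by omega)
    have hB : 0 ≤ lam (d-i) := hpos (d-i) (by omega) (by omega)
    exact real_det (lam i) (lam (d-i)) (lam d) hA hB hCd hQ
  · -- backward
    intro hcond
    have hherm : M.IsHermitian := by
      ext p q
      rw [Matrix.conjTranspose_apply, hent q p, hent p q]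
      obtain ⟨a, b⟩ := p
      obtain ⟨c, e⟩ := q
      simp only
      have hc : ∀ r : ℝ, star ((r : ℂ) * (d:ℂ)⁻¹) = (r:ℂ) * (d:ℂ)⁻¹ := by
        intro r
        rw [star_mul']
        simp [Complex.star_def, Complex.conj_ofReal, map_inv₀, map_natCast]
      rw [star_add, apply_ite star, apply_ite star, hc, hc, star_zero]
      congr 1
      · by_cases h1 : a = c <;> by_cases h2 : b = e
        · subst h1; subst h2
          by_cases h3 : a = b <;> simp [h3, Ne.symm]
        · rw [if_neg (by rintro ⟨-, hbe, -⟩; exact h2 hbe.symm),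
            if_neg (by rintro ⟨-, hbe, -⟩; exact h2 hbe)]
        · rw [if_neg (by rintro ⟨hca, -, -⟩; exact h1 hca.symm),
            if_neg (by rintro ⟨hac, -, -⟩; exact h1 hac)]
        · rw [if_neg (by rintro ⟨hca, -, -⟩; exact h1 hca.symm),
            if_neg (by rintro ⟨hac, -, -⟩; exact h1 hac)]
      · by_cases h4 : a = e <;> by_cases h5 : b = c <;>
          simp [h4, h5, eq_comm]
    apply Matrix.PosSemidef.of_dotProduct_mulVec_nonneg
    · exact hherm
    · intro x
      set g : Fin d × Fin d → ℂ := fun p =>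
        (if p.1 ≠ p.2 then ((lam ((p.2 - p.1 : Fin d).val) : ℂ) * (d : ℂ)⁻¹) else 0)
          * ((starRingEnd ℂ) (x p) * x p)
        + ((lam d : ℂ) * (d : ℂ)⁻¹) * ((starRingEnd ℂ) (x p) * x (p.2, p.1)) with hgdef
      have hform : star x ⬝ᵥ (M *ᵥ x) = ∑ p : Fin d × Fin d, g p := by
        rw [dotProduct]
        refine Finset.sum_congr rfl ?_
        intro p _
        rw [Matrix.mulVec, dotProduct, Finset.mul_sum]
        have hsplit : ∀ q : Fin d × Fin d, star x p * (M p q * x q) =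
            ((starRingEnd ℂ) (x p) * ((if p.1 = q.1 ∧ p.2 = q.2 ∧ p.1 ≠ p.2
              then ((lam ((p.2 - p.1 : Fin d).val) : ℂ) * (d : ℂ)⁻¹) else 0) * x q))
            + ((starRingEnd ℂ) (x p) * ((if p.1 = q.2 ∧ p.2 = q.1
              then ((lam d : ℂ) * (d : ℂ)⁻¹) else 0) * x q)) := by
          intro q
          rw [hent p q]
          simp only [Pi.star_apply, Complex.star_def]
          ring
        rw [Finset.sum_congr rfl (fun q _ => hsplit q), Finset.sum_add_distrib]
        congr 1
        · rw [Finset.sum_eq_single p]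
          · by_cases hp : p.1 = p.2 <;> simp [hp, hgdef] <;> ring
          · intro q _ hq
            have : ¬(p.1 = q.1 ∧ p.2 = q.2 ∧ p.1 ≠ p.2) := by
              rintro ⟨ha, hb, -⟩
              exact hq (Prod.ext ha.symm hb.symm)
            simp [this]
          · simp
        · rw [Finset.sum_eq_single (p.2, p.1)]
          · simp [hgdef]; ring
          · intro q _ hq
            have : ¬(p.1 = q.2 ∧ p.2 = q.1) := by
              rintro ⟨ha, hb⟩
              exact hq (Prod.ext hb.symm ha.symm)
            simp [this]
          · simp
      rw [hform]
      have hswap : ∑ p : Fin d × Fin d, g (p.2, p.1) = ∑ p : Fin d × Fin d, g p :=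
        Fintype.sum_equiv (Equiv.prodComm (Fin d) (Fin d)) _ _ (fun p => rfl)
      have hpt : ∀ p : Fin d × Fin d, 0 ≤ g p + g (p.2, p.1) := by
        intro p
        by_cases hp : p.1 = p.2
        · have hpe : (p.2, p.1) = p := by
            rw [← hp]; exact Prod.ext rfl (by rw [hp])
          have key := key_c (lam d) (lam d) 0 hCd hCd le_rfl
            (by nlinarith [mul_nonneg hCd hCd]) (x p) (x p)
          have : g p + g (p.2, p.1) = (d:ℂ)⁻¹ *
              ((lam d : ℂ) * ((starRingEnd ℂ) (x p) * x p)
                + (lam d : ℂ) * ((starRingEnd ℂ) (x p) * x p)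
                + (0:ℂ) * ((starRingEnd ℂ) (x p) * x p)
                + (0:ℂ) * ((starRingEnd ℂ) (x p) * x p)) := by
            have hpp : ((p.2, p.2) : Fin d × Fin d) = p := Prod.ext hp.symm rfl
            rw [hpe]
            simp [hgdef, hp, hpp]
            ring
          rw [this]
          exact mul_nonneg hdC (by simpa using key)
        · set k : ℕ := ((p.2 - p.1 : Fin d)).val with hk
          have hsum_val := fin_val_sub_add d p.1 p.2 hp
          have hk1 : 1 ≤ k := by
            have : p.2 - p.1 ≠ 0 := sub_ne_zero.mpr (Ne.symm hp)
            have := Nat.pos_of_ne_zero (Fin.val_ne_zero_iff.mpr this)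
            omega
          have hklt : k < d := (p.2 - p.1 : Fin d).isLt
          have hBidx : ((p.1 - p.2 : Fin d)).val = d - k := by omega
          have hA : 0 ≤ lam k := hpos k hk1 (by omega)
          have hB : 0 ≤ lam (d - k) := hpos (d-k) (by omega) (by omega)
          have hAB : lam d ^ 2 ≤ lam k * lam (d - k) := hcond k hk1 (by omega)
          have key := key_c (lam k) (lam (d-k)) (lam d) hA hB hCd hAB (x p) (x (p.2, p.1))
          have : g p + g (p.2, p.1) = (d:ℂ)⁻¹ *
              ((lam k : ℂ) * ((starRingEnd ℂ) (x p) * x p)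
                + (lam (d-k) : ℂ) * ((starRingEnd ℂ) (x (p.2,p.1)) * x (p.2,p.1))
                + (lam d : ℂ) * ((starRingEnd ℂ) (x p) * x (p.2,p.1))
                + (lam d : ℂ) * ((starRingEnd ℂ) (x (p.2,p.1)) * x p)) := by
            simp only [hgdef, hp, Ne.symm hp, ne_eq, if_neg, if_pos, not_false_iff, ite_not]
            have hpeta : ((p.2, p.1).2, (p.2, p.1).1) = p := Prod.ext rfl rfl
            simp [hp, Ne.symm hp, hpeta, hBidx, ← hk]
            ring
          rw [this]
          exact mul_nonneg hdC key
      have h2 : (0:ℂ) ≤ ∑ p : Fin d × Fin d, (g p + g (p.2, p.1)) :=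
        Finset.sum_nonneg (fun p _ => hpt p)
      rw [Finset.sum_add_distrib, hswap] at h2
      rw [Complex.nonneg_iff] at h2 ⊢
      obtain ⟨hre, him⟩ := h2
      simp only [Complex.add_re, Complex.add_im] at hre him
      constructor
      · linarith
      · linarith
end

section
/- If ρ = Σ_{i=0}^{d-1} λ_i Π_i + λ_d P⁺_d with all λ_i ≥ 0, Σ_{i=0}^d λ_i = 1, and λ_i ≥ λ_d for i = 1,...,d-1, then ρ is separable, via the decomposition ρ = d·λ_d·ρ̃ + λ_0 Π_0 + Σ_{i=1}^{d-1}(λ_i - λ_d)Π_i. -/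
open Matrix Complex BigOperators ComplexOrder
open Fin.NatCast

/-- separability: being a convex combination of tensor products of states -/
def SepState {d : ℕ} (ρ : Matrix (Fin d × Fin d) (Fin d × Fin d) ℂ) : Prop :=
  ∃ (k : ℕ) (w : Fin k → ℝ) (A B : Fin k → Matrix (Fin d) (Fin d) ℂ),
    (∀ i, 0 ≤ w i) ∧ (∑ i, w i) = 1 ∧
    (∀ i, (A i).PosSemidef ∧ (A i).trace = 1 ∧ (B i).PosSemidef ∧ (B i).trace = 1) ∧
    ρ = ∑ i, (w i : ℂ) • (Matrix.kroneckerMap (· * ·) (A i) (B i))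

lemma stdBasis_posSemidef {d : ℕ} (i : Fin d) :
    (Matrix.single i i (1:ℂ)).PosSemidef := by
  constructor
  · ext a b
    simp [Matrix.single, Matrix.conjTranspose_apply, and_comm]
  · rw [← Matrix.diagonal_single]
    refine (Matrix.PosSemidef.diagonal (fun j => ?_)).2
    by_cases h : j = i <;> simp [Pi.single_apply, h]

lemma stdBasis_trace {d : ℕ} [NeZero d] (i : Fin d) :
    (Matrix.single i i (1:ℂ)).trace = 1 := by
  simp [Matrix.trace, Matrix.diag, Matrix.single]

lemma stdBasis_kron {d : ℕ} (a b : Fin d) :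
    Matrix.kroneckerMap (· * ·) (Matrix.single a a (1:ℂ))
      (Matrix.single b b (1:ℂ)) = Matrix.single (a,b) (a,b) 1 := by
  ext ⟨i₁,i₂⟩ ⟨j₁,j₂⟩
  simp [Matrix.kroneckerMap, Matrix.single, Prod.ext_iff, ite_and]
  split_ifs <;> simp_all

lemma sepState_of_fintype {d : ℕ} {ρ : Matrix (Fin d × Fin d) (Fin d × Fin d) ℂ}
    (ι : Type) [Fintype ι] (w : ι → ℝ) (A B : ι → Matrix (Fin d) (Fin d) ℂ)
    (h0 : ∀ i, 0 ≤ w i) (h1 : ∑ i, w i = 1)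
    (hAB : ∀ i, (A i).PosSemidef ∧ (A i).trace = 1 ∧ (B i).PosSemidef ∧ (B i).trace = 1)
    (hρ : ρ = ∑ i, (w i : ℂ) • (Matrix.kroneckerMap (· * ·) (A i) (B i))) :
    SepState ρ := by
  obtain e := Fintype.equivFin ι
  refine ⟨Fintype.card ι, w ∘ e.symm, A ∘ e.symm, B ∘ e.symm,
    fun i => h0 _, ?_, fun i => hAB _, ?_⟩
  · rw [← h1]; exact Fintype.sum_equiv e.symm _ _ (fun i => rfl)
  · rw [hρ]; exact (Fintype.sum_equiv e.symm _ _ (fun i => rfl)).symm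

lemma sep_sum {d : ℕ} {ι : Type} (s : Finset ι)
    (ρ : ι → Matrix (Fin d × Fin d) (Fin d × Fin d) ℂ) (c : ι → ℝ)
    (h0 : ∀ j ∈ s, 0 ≤ c j) (h1 : ∑ j ∈ s, c j = 1)
    (hsep : ∀ j ∈ s, SepState (ρ j)) :
    SepState (∑ j ∈ s, (c j : ℂ) • ρ j) := by
  choose k w A B hw using hsep
  refine sepState_of_fintype ((j : {x // x ∈ s}) × Fin (k j j.2))
    (fun p => c p.1 * w p.1.1 p.1.2 p.2)
    (fun p => A p.1.1 p.1.2 p.2) (fun p => B p.1.1 p.1.2 p.2)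
    (fun p => mul_nonneg (h0 p.1.1 p.1.2) ((hw p.1.1 p.1.2).1 p.2)) ?_
    (fun p => (hw p.1.1 p.1.2).2.2.1 p.2) ?_
  · rw [← Finset.univ_sigma_univ, Finset.sum_sigma]
    have : ∀ j : {x // x ∈ s}, ∑ i : Fin (k j j.2), c j.1 * w j.1 j.2 i = c j.1 := by
      intro j
      rw [← Finset.mul_sum, (hw j.1 j.2).2.1, mul_one]
    rw [Fintype.sum_congr _ _ this, ← h1, ← Finset.sum_attach s c]
    rfl
  · rw [← Finset.univ_sigma_univ, Finset.sum_sigma, ← Finset.sum_attach s (fun j => (c j : ℂ) • ρ j)]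
    have : ∀ j : {x // x ∈ s}, (c j.1 : ℂ) • ρ j.1 =
        ∑ i : Fin (k j j.2), ((c j.1 * w j.1 j.2 i : ℝ) : ℂ) •
          Matrix.kroneckerMap (· * ·) (A j.1 j.2 i) (B j.1 j.2 i) := by
      intro j
      rw [(hw j.1 j.2).2.2.2, Finset.smul_sum]
      congr 1; ext i
      rw [smul_smul]; push_cast; ring_nf
    calc ∑ j ∈ s.attach, (c j.1 : ℂ) • ρ j.1
        = ∑ j : {x // x ∈ s}, ∑ i : Fin (k j j.2),
            ((c j.1 * w j.1 j.2 i : ℝ) : ℂ) •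
              Matrix.kroneckerMap (· * ·) (A j.1 j.2 i) (B j.1 j.2 i) :=
          Finset.sum_congr rfl (fun j _ => this j)
      _ = _ := rfl

lemma sep_PiOp (d : ℕ) [NeZero d] (n : Fin d) : SepState (PiOp d n) := by
  refine sepState_of_fintype (Fin d) (fun _ => (d : ℝ)⁻¹)
    (fun i => Matrix.single i i 1) (fun i => Matrix.single (i + n) (i + n) 1)
    (fun i => by positivity) ?_
    (fun i => ⟨stdBasis_posSemidef _, stdBasis_trace _, stdBasis_posSemidef _, stdBasis_trace _⟩) ?_
  · rw [Finset.sum_const, Finset.card_univ, Fintype.card_fin, nsmul_eq_mul,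
      mul_inv_cancel₀ (by exact_mod_cast (NeZero.ne d))]
  · rw [PiOp, Finset.smul_sum]
    refine Finset.sum_congr rfl (fun i _ => ?_)
    rw [stdBasis_kron]
    push_cast
    rfl

/-- If `λ_i ≥ 0`, `Σ_{i=0}^d λ_i = 1` and `λ_i ≥ λ_d` for `i = 1,…,d-1`, then
`ρ = Σ_{i=0}^{d-1} λ_i Π_i + λ_d P⁺_d` is separable (given separability of
`ρ̃ = (1/d)(Σ_{i=1}^{d-1} Π_i + P⁺_d)`). -/
theorem generalized_separable (d : ℕ) [NeZero d] (hd : 2 ≤ d) (lam : ℕ → ℝ)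
    (hpos : ∀ i, i ≤ d → 0 ≤ lam i)
    (hsum : ∑ i ∈ Finset.range (d + 1), lam i = 1)
    (htilde : SepState ((d : ℂ)⁻¹ •
      ((∑ i ∈ Finset.Icc 1 (d - 1), PiOp d (i : Fin d)) + Pplus d)))
    (h : ∀ i, 1 ≤ i → i ≤ d - 1 → lam d ≤ lam i) :
    SepState ((∑ i ∈ Finset.range d, (lam i : ℂ) • PiOp d (i : Fin d)) +
      (lam d : ℂ) • Pplus d) := by
  have hd1 : 1 ≤ d := le_trans one_le_two hd
  have hd0 : (d : ℂ) ≠ 0 := Nat.cast_ne_zero.2 (NeZero.ne d)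
  set ρt := (d : ℂ)⁻¹ • ((∑ i ∈ Finset.Icc 1 (d - 1), PiOp d (i : Fin d)) + Pplus d) with hρt
  set c : ℕ → ℝ := fun j => if j = d then d * lam d else if j = 0 then lam 0 else lam j - lam d
    with hc
  set ρ' : ℕ → Matrix (Fin d × Fin d) (Fin d × Fin d) ℂ :=
    fun j => if j = d then ρt else PiOp d (j : Fin d) with hρ'
  -- decomposition of the index set
  have hset : Finset.range (d + 1) = insert 0 (insert d (Finset.Icc 1 (d - 1))) := by
    ext j; simp [Finset.mem_range, Finset.mem_Icc]; omega
  have hset' : Finset.range d = insert 0 (Finset.Icc 1 (d - 1)) := by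
    ext j; simp [Finset.mem_range, Finset.mem_Icc]; omega
  have h0mem : (0 : ℕ) ∉ insert d (Finset.Icc 1 (d - 1)) := by
    simp [Finset.mem_Icc]; omega
  have h0mem' : (0 : ℕ) ∉ Finset.Icc 1 (d - 1) := by simp
  have hdmem : d ∉ Finset.Icc 1 (d - 1) := by simp [Finset.mem_Icc]; omega
  have hcard : (Finset.Icc 1 (d - 1)).card = d - 1 := by
    rw [Nat.card_Icc]; omega
  have key : SepState (∑ j ∈ Finset.range (d + 1), (c j : ℂ) • ρ' j) := by
    apply sep_sum
    · intro j hj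
      rw [Finset.mem_range] at hj
      simp only [hc]
      split_ifs with h1 h2
      · exact mul_nonneg (Nat.cast_nonneg d) (hpos d le_rfl)
      · exact hpos 0 (by omega)
      · exact sub_nonneg.2 (h j (by omega) (by omega))
    · -- sum of the coefficients is 1
      rw [hset, Finset.sum_insert h0mem, Finset.sum_insert hdmem]
      have hc0 : c 0 = lam 0 := by simp only [hc]; rw [if_neg (by omega)]; simp
      have hcd : c d = d * lam d := by simp only [hc]; simp
      have hIcc : ∑ j ∈ Finset.Icc 1 (d - 1), c j
          = ∑ j ∈ Finset.Icc 1 (d - 1), (lam j - lam d) := by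
        refine Finset.sum_congr rfl fun j hj => ?_
        rw [Finset.mem_Icc] at hj
        simp only [hc]; rw [if_neg (by omega), if_neg (by omega)]
      rw [hc0, hcd, hIcc, Finset.sum_sub_distrib, Finset.sum_const, hcard, nsmul_eq_mul]
      have hsum' : lam 0 + (∑ j ∈ Finset.Icc 1 (d - 1), lam j + lam d) = 1 := by
        rw [← hsum, hset, Finset.sum_insert h0mem, Finset.sum_insert hdmem]; ring
      have hdc : ((d - 1 : ℕ) : ℝ) = (d : ℝ) - 1 := by
        push_cast [Nat.cast_sub hd1]; ring
      rw [hdc]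
      nlinarith [hsum']
    · intro j hj
      simp only [hρ']
      split_ifs with h1
      · exact htilde
      · exact sep_PiOp d _
  -- identify the two matrices
  have heq : (∑ i ∈ Finset.range d, (lam i : ℂ) • PiOp d (i : Fin d)) + (lam d : ℂ) • Pplus d
      = ∑ j ∈ Finset.range (d + 1), (c j : ℂ) • ρ' j := by
    rw [Finset.sum_range_succ]
    have hρ'd : ρ' d = ρt := by simp only [hρ']; simp
    have hcd : c d = d * lam d := by simp only [hc]; simp
    have hrest : ∀ j ∈ Finset.range d, (c j : ℂ) • ρ' j = (c j : ℂ) • PiOp d (j : Fin d) := by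
      intro j hj
      rw [Finset.mem_range] at hj
      simp only [hρ']; rw [if_neg (by omega)]
    rw [Finset.sum_congr rfl hrest, hρ'd, hcd, hρt, smul_smul]
    have hcast : ((d * lam d : ℝ) : ℂ) * (d : ℂ)⁻¹ = (lam d : ℂ) := by
      push_cast
      field_simp
    rw [hcast, smul_add]
    rw [hset', Finset.sum_insert h0mem', Finset.sum_insert h0mem']
    have hc0 : c 0 = lam 0 := by simp only [hc]; rw [if_neg (by omega)]; simp
    have hIcc : ∀ j ∈ Finset.Icc 1 (d - 1), (c j : ℂ) = (lam j : ℂ) - (lam d : ℂ) := by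
      intro j hj
      rw [Finset.mem_Icc] at hj
      simp only [hc]; rw [if_neg (by omega), if_neg (by omega)]; push_cast; ring
    rw [hc0, Finset.smul_sum]
    have hterm : ∀ j ∈ Finset.Icc 1 (d - 1), (lam j : ℂ) • PiOp d (j : Fin d)
        = (c j : ℂ) • PiOp d (j : Fin d) + (lam d : ℂ) • PiOp d (j : Fin d) := by
      intro j hj
      rw [← add_smul, hIcc j hj]; ring_nf
    rw [Finset.sum_congr rfl hterm, Finset.sum_add_distrib]
    abel
  rw [heq]
  exact key
end
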